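/- Assume μ is uniform and let ξ ∈ ℂ. Then almost surely, for every 0 < r < 1, sup_{|z| ≤ r} |(1/n) D_ξPₙ(ω)(z)/Pₙ(ω)(z) − 1| → 0 as n → ∞, where D_ξPₙ(ω)(z) = nPₙ(ω)(z) − (z − ξ)Pₙ(ω)′(z) is the polar derivative of Pₙ(ω) with respect to ξ. -/

import Mathlib

open MeasureTheory Filter Polynomial

/-- The polar derivative `D_ξ P(z) = nP(z) - (z - ξ)P'(z)` of a degree-`n`
polynomial `P` with respect to `ξ ∈ ℂ`. -/
noncomputable def polarDeriv (n : ℕ) (ξ : ℂ) (p : Polynomial ℂ) : Polynomial ℂ :=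
  C (n : ℂ) * p - (X - C ξ) * Polynomial.derivative p

/-- The uniform (normalized arc-length / Haar) probability measure on the unit circle
`S¹ ⊆ ℂ`: the pushforward of normalized Lebesgue measure on `(0, 2π]` under
`θ ↦ exp(iθ)`. -/
noncomputable def uniformCircleMeasure : Measure ℂ :=
  Measure.map (fun θ : ℝ => Complex.exp (θ * Complex.I))
    ((ENNReal.ofReal (2 * Real.pi))⁻¹ • volume.restrict (Set.Ioc 0 (2 * Real.pi)))

open Topology Finset

section Aux

lemma st13_integral_inv_pow (m : ℕ) :
    ∫ w : ℂ, (w⁻¹)^(m+1) ∂uniformCircleMeasure = 0 := by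
  have hc : (-((m:ℂ)+1) * Complex.I) ≠ 0 :=
    mul_ne_zero (neg_ne_zero.mpr (Nat.cast_add_one_ne_zero m)) Complex.I_ne_zero
  rw [uniformCircleMeasure,
    integral_map (by fun_prop) ((measurable_inv.pow_const (m+1)).aestronglyMeasurable)]
  rw [integral_smul_measure]
  have h1 : ∀ θ : ℝ, ((Complex.exp (θ * Complex.I))⁻¹)^(m+1)
      = Complex.exp (-((m:ℂ)+1) * Complex.I * θ) := by
    intro θ
    rw [← Complex.exp_neg, ← Complex.exp_nat_mul]
    congr 1
    push_cast
    ring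
  simp only [h1]
  have h2 : ∫ θ in Set.Ioc (0:ℝ) (2*Real.pi), Complex.exp (-((m:ℂ)+1) * Complex.I * θ)
      = ∫ θ in (0:ℝ)..(2*Real.pi), Complex.exp (-((m:ℂ)+1) * Complex.I * θ) := by
    rw [intervalIntegral.integral_of_le (by positivity)]
  rw [h2, integral_exp_mul_complex hc]
  have h3 : Complex.exp ((-((m:ℂ)+1) * Complex.I) * ((2 * Real.pi : ℝ) : ℂ)) = 1 := by
    rw [show (-((m:ℂ)+1) * Complex.I) * ((2 * Real.pi : ℝ) : ℂ)
        = ((-((m:ℤ)+1) : ℤ) : ℂ) * (2 * Real.pi * Complex.I) by push_cast; ring,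
      Complex.exp_int_mul_two_pi_mul_I]
  rw [h3]
  simp

lemma st13_measSetAbs : MeasurableSet {z : ℂ | ‖z‖ = 1} :=
  (isClosed_eq continuous_norm continuous_const).measurableSet

lemma st13_uniformCircle_compl : uniformCircleMeasure {z : ℂ | ‖z‖ = 1}ᶜ = 0 := by
  rw [uniformCircleMeasure, Measure.map_apply (by fun_prop) st13_measSetAbs.compl]
  have : (fun θ : ℝ => Complex.exp (θ * Complex.I)) ⁻¹' {z : ℂ | ‖z‖ = 1}ᶜ = ∅ := by
    ext θ
    simp [Complex.norm_exp]
  simp [this]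

lemma st13_abs_one_ae {Ω : Type*} [MeasurableSpace Ω] (ℙ : Measure Ω)
    (Z : ℕ → Ω → ℂ) (hZmeas : ∀ i, Measurable (Z i))
    (hZlaw : ∀ i, Measure.map (Z i) ℙ = uniformCircleMeasure) (j : ℕ) :
    ∀ᵐ ω ∂ℙ, ‖Z j ω‖ = 1 := by
  rw [ae_iff]
  have : {ω | ¬ ‖Z j ω‖ = 1} = Z j ⁻¹' {z : ℂ | ‖z‖ = 1}ᶜ := by
    ext ω; simp
  rw [this, ← Measure.map_apply (hZmeas j) st13_measSetAbs.compl, hZlaw j,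
    st13_uniformCircle_compl]

lemma st13_slln_pow {Ω : Type*} [MeasurableSpace Ω] (ℙ : Measure Ω) [IsProbabilityMeasure ℙ]
    (Z : ℕ → Ω → ℂ) (hZmeas : ∀ i, Measurable (Z i))
    (hZlaw : ∀ i, Measure.map (Z i) ℙ = uniformCircleMeasure)
    (hZindep : ProbabilityTheory.iIndepFun Z ℙ) (m : ℕ) :
    ∀ᵐ ω ∂ℙ, Tendsto (fun n : ℕ => (n : ℝ)⁻¹ • ∑ j ∈ Finset.range n, ((Z j ω)⁻¹)^(m+1))
      atTop (𝓝 0) := by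
  set f : ℂ → ℂ := fun w => (w⁻¹)^(m+1) with hf_def
  have hf : Measurable f := measurable_inv.pow_const (m+1)
  set X : ℕ → Ω → ℂ := fun i ω => f (Z i ω) with hX_def
  have hint : Integrable (X 0) ℙ := by
    apply Integrable.mono' (integrable_const (1:ℝ)) (hf.comp (hZmeas 0)).aestronglyMeasurable
    filter_upwards [st13_abs_one_ae ℙ Z hZmeas hZlaw 0] with ω hω
    simp only [hX_def, hf_def, Function.comp_apply, norm_pow, norm_inv, hω]
    norm_num
  have hindep : Pairwise (Function.onFun (ProbabilityTheory.IndepFun · · ℙ) X) :=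
    fun i j hij => (hZindep.indepFun hij).comp hf hf
  have hident : ∀ i, ProbabilityTheory.IdentDistrib (X i) (X 0) ℙ ℙ := fun i =>
    (ProbabilityTheory.IdentDistrib.comp ⟨(hZmeas i).aemeasurable, (hZmeas 0).aemeasurable,
      by rw [hZlaw i, hZlaw 0]⟩ hf)
  have hmean : (∫ ω, X 0 ω ∂ℙ) = 0 := by
    have : (∫ ω, X 0 ω ∂ℙ) = ∫ w, f w ∂(Measure.map (Z 0) ℙ) :=
      (integral_map (hZmeas 0).aemeasurable hf.aestronglyMeasurable).symm
    rw [this, hZlaw 0]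
    exact st13_integral_inv_pow m
  have := ProbabilityTheory.strong_law_ae X hint hindep hident
  rw [hmean] at this
  exact this

lemma st13_geomId (z w : ℂ) (hw : w ≠ 0) (hzw : z - w ≠ 0) (K : ℕ) :
    (z - w)⁻¹ = -∑ k ∈ range (K+1), z^k * (w⁻¹)^(k+1)
      + z^(K+1) * (w⁻¹)^(K+1) * (z - w)⁻¹ := by
  have key : (z - w) * ∑ k ∈ range (K+1), z^k * (w⁻¹)^(k+1)
      = z^(K+1) * (w⁻¹)^(K+1) - 1 := by
    rw [Finset.mul_sum]
    have h1 : ∀ k, (z - w) * (z^k * (w⁻¹)^(k+1))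
        = z^(k+1)*(w⁻¹)^(k+1) - z^k*(w⁻¹)^k := by
      intro k
      have h := mul_inv_cancel₀ hw
      linear_combination (-(z^k) * (w⁻¹)^k) * h
    simp_rw [h1]
    rw [Finset.sum_range_sub (fun k => z^k * (w⁻¹)^k)]
    simp
  have hS : ∑ k ∈ range (K+1), z^k * (w⁻¹)^(k+1)
      = (z - w)⁻¹ * (z^(K+1)*(w⁻¹)^(K+1) - 1) := by
    rw [← key, ← mul_assoc, inv_mul_cancel₀ hzw, one_mul]
  rw [hS]; ring

lemma st13_logDeriv_eval (z : ℂ) (w : ℕ → ℂ) (n : ℕ) (hzw : ∀ j ∈ range n, z - w j ≠ 0) :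
    eval z (Polynomial.derivative (∏ j ∈ range n, (X - C (w j))))
      = (eval z (∏ j ∈ range n, (X - C (w j)))) * ∑ j ∈ range n, (z - w j)⁻¹ := by
  induction n with
  | zero => simp
  | succ n ih =>
    have hzw' : ∀ j ∈ range n, z - w j ≠ 0 := fun j hj =>
      hzw j (Finset.mem_range.mpr ((Finset.mem_range.mp hj).trans (Nat.lt_succ_self n)))
    have hlast : z - w n ≠ 0 := hzw n (Finset.mem_range.mpr (Nat.lt_succ_self n))
    rw [Finset.prod_range_succ, Finset.sum_range_succ, Polynomial.derivative_mul]
    simp only [Polynomial.derivative_sub, Polynomial.derivative_X, Polynomial.derivative_C,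
      sub_zero, eval_add, eval_mul, eval_sub, eval_X, eval_C, eval_one, mul_one]
    rw [ih hzw']
    have h := mul_inv_cancel₀ hlast
    linear_combination (-(eval z (∏ j ∈ range n, (X - C (w j))))) * h

lemma st13_mainId (z ξ : ℂ) (w : ℕ → ℂ) (n : ℕ) (hn : 0 < n)
    (hzw : ∀ j ∈ range n, z - w j ≠ 0) :
    (n : ℂ)⁻¹ * eval z (polarDeriv n ξ (∏ j ∈ range n, (X - C (w j)))) /
        eval z (∏ j ∈ range n, (X - C (w j))) - 1
      = -((z - ξ) * (n:ℂ)⁻¹ * ∑ j ∈ range n, (z - w j)⁻¹) := by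
  have hP : eval z (∏ j ∈ range n, (X - C (w j))) ≠ 0 := by
    rw [eval_prod]
    exact Finset.prod_ne_zero_iff.mpr (by simpa using hzw)
  have hn' : (n : ℂ) ≠ 0 := Nat.cast_ne_zero.mpr hn.ne'
  rw [polarDeriv]
  simp only [eval_sub, eval_mul, eval_C, eval_X]
  rw [st13_logDeriv_eval z w n hzw]
  field_simp
  ring

lemma st13_boundLem (z ξ : ℂ) (r : ℝ) (hr0 : 0 < r) (hr1 : r < 1) (hz : ‖z‖ ≤ r)
    (w : ℕ → ℂ) (hw : ∀ j, ‖w j‖ = 1) (n : ℕ) (hn : 0 < n) (K : ℕ) :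
    ‖(n : ℂ)⁻¹ * eval z (polarDeriv n ξ (∏ j ∈ range n, (X - C (w j)))) /
        eval z (∏ j ∈ range n, (X - C (w j))) - 1‖
      ≤ (r + ‖ξ‖) *
        ((∑ k ∈ range (K+1), (n:ℝ)⁻¹ * ‖∑ j ∈ range n, ((w j)⁻¹)^(k+1)‖)
          + r^(K+1) / (1-r)) := by
  have hw0 : ∀ j, w j ≠ 0 := fun j h => by simpa [h] using hw j
  have hzw : ∀ j ∈ range n, z - w j ≠ 0 := by
    intro j _
    rw [sub_ne_zero]
    intro h
    rw [h, hw j] at hz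
    linarith
  have hdist : ∀ j, 1 - r ≤ ‖z - w j‖ := by
    intro j
    calc 1 - r ≤ ‖w j‖ - ‖z‖ := by rw [hw j]; linarith
    _ ≤ ‖w j - z‖ := by
        have := norm_sub_norm_le (w j) z
        simpa using this
    _ = ‖z - w j‖ := by rw [← norm_neg, neg_sub]
  rw [st13_mainId z ξ w n hn hzw]
  rw [norm_neg, norm_mul, norm_mul]
  have hnR : ‖(n:ℂ)⁻¹‖ = (n:ℝ)⁻¹ := by
    rw [norm_inv, Complex.norm_natCast]
  rw [hnR]
  have hzxi : ‖z - ξ‖ ≤ r + ‖ξ‖ := by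
    calc ‖z - ξ‖ ≤ ‖z‖ + ‖ξ‖ := by
          simpa using norm_sub_le z ξ
    _ ≤ r + ‖ξ‖ := by linarith
  have hsum : (n:ℝ)⁻¹ * ‖∑ j ∈ range n, (z - w j)⁻¹‖
      ≤ (∑ k ∈ range (K+1), (n:ℝ)⁻¹ * ‖∑ j ∈ range n, ((w j)⁻¹)^(k+1)‖)
        + r^(K+1) / (1-r) := by
    have hsplit : ∑ j ∈ range n, (z - w j)⁻¹
        = (-∑ k ∈ range (K+1), z^k * ∑ j ∈ range n, ((w j)⁻¹)^(k+1))
          + ∑ j ∈ range n, z^(K+1) * ((w j)⁻¹)^(K+1) * (z - w j)⁻¹ := by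
      rw [Finset.sum_congr rfl (fun j hj => st13_geomId z (w j) (hw0 j) (hzw j hj) K),
        Finset.sum_add_distrib]
      congr 1
      rw [Finset.sum_neg_distrib, Finset.sum_comm]
      congr 1
      exact Finset.sum_congr rfl fun k _ => (Finset.mul_sum _ _ _).symm
    have h2 : ‖∑ j ∈ range n, (z - w j)⁻¹‖
        ≤ (∑ k ∈ range (K+1), ‖∑ j ∈ range n, ((w j)⁻¹)^(k+1)‖)
          + n * (r^(K+1) / (1-r)) := by
      rw [hsplit]
      refine (norm_add_le _ _).trans (add_le_add ?_ ?_)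
      · rw [norm_neg]
        refine (norm_sum_le _ _).trans (Finset.sum_le_sum fun k _ => ?_)
        rw [norm_mul, norm_pow]
        calc ‖z‖ ^ k * ‖∑ j ∈ range n, ((w j)⁻¹)^(k+1)‖
            ≤ 1 * ‖∑ j ∈ range n, ((w j)⁻¹)^(k+1)‖ := by
              apply mul_le_mul_of_nonneg_right _ (norm_nonneg _)
              exact pow_le_one₀ (norm_nonneg z) (hz.trans hr1.le)
          _ = _ := one_mul _
      · refine (norm_sum_le _ _).trans ?_
        have heach : ∀ j ∈ range n,
            ‖z^(K+1) * ((w j)⁻¹)^(K+1) * (z - w j)⁻¹‖ ≤ r^(K+1) / (1-r) := by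
          intro j _
          rw [norm_mul, norm_mul, norm_pow, norm_pow, norm_inv, norm_inv, hw j]
          simp only [inv_one, one_pow, mul_one]
          rw [div_eq_mul_inv]
          apply mul_le_mul (pow_le_pow_left₀ (norm_nonneg z) hz _)
            (inv_anti₀ (by linarith) (hdist j)) (by positivity) (by positivity)
        calc ∑ j ∈ range n, ‖z^(K+1) * ((w j)⁻¹)^(K+1) * (z - w j)⁻¹‖
            ≤ ∑ _j ∈ range n, r^(K+1) / (1-r) := Finset.sum_le_sum heach
          _ = n * (r^(K+1) / (1-r)) := by rw [Finset.sum_const, Finset.card_range, nsmul_eq_mul]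
    calc (n:ℝ)⁻¹ * ‖∑ j ∈ range n, (z - w j)⁻¹‖
        ≤ (n:ℝ)⁻¹ * ((∑ k ∈ range (K+1), ‖∑ j ∈ range n, ((w j)⁻¹)^(k+1)‖)
            + n * (r^(K+1) / (1-r))) := by
          apply mul_le_mul_of_nonneg_left h2 (by positivity)
      _ = (∑ k ∈ range (K+1), (n:ℝ)⁻¹ * ‖∑ j ∈ range n, ((w j)⁻¹)^(k+1)‖)
            + r^(K+1) / (1-r) := by
          rw [mul_add, Finset.mul_sum, ← mul_assoc,
            inv_mul_cancel₀ (Nat.cast_ne_zero.mpr hn.ne' : (n:ℝ) ≠ 0), one_mul]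
  rw [mul_assoc]
  exact mul_le_mul hzxi hsum (by positivity) (by positivity)

end Aux

/-- Let `Z₁, Z₂, …` be i.i.d. with the uniform (Haar) law on the unit
circle, and `ξ ∈ ℂ`.  Then almost surely, for every `0 < r < 1`,
`sup_{|z| ≤ r} |(1/n) D_ξPₙ(ω)(z)/Pₙ(ω)(z) - 1| → 0` as `n → ∞`. -/
theorem statement13
    {Ω : Type*} [MeasurableSpace Ω] (ℙ : Measure Ω) [IsProbabilityMeasure ℙ]
    (Z : ℕ → Ω → ℂ) (hZmeas : ∀ i, Measurable (Z i))
    (hZlaw : ∀ i, Measure.map (Z i) ℙ = uniformCircleMeasure)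
    (hZindep : ProbabilityTheory.iIndepFun Z ℙ)
    (ξ : ℂ) :
    ∀ᵐ ω ∂ℙ, ∀ r : ℝ, 0 < r → r < 1 →
      Tendsto
        (fun n : ℕ => ⨆ z ∈ Metric.closedBall (0 : ℂ) r,
          ‖(n : ℂ)⁻¹ *
                Polynomial.eval z
                  (polarDeriv n ξ (∏ j ∈ Finset.range n, (X - C (Z j ω)))) /
                Polynomial.eval z (∏ j ∈ Finset.range n, (X - C (Z j ω))) - 1‖)
        atTop (nhds 0) := by
  filter_upwards [ae_all_iff.mpr (fun j => st13_abs_one_ae ℙ Z hZmeas hZlaw j),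
    ae_all_iff.mpr (fun m => st13_slln_pow ℙ Z hZmeas hZlaw hZindep m)] with ω habs hsl
  intro r hr0 hr1
  set Cc := r + ‖ξ‖ with hC_def
  have hC : 0 < Cc := by positivity
  rw [Metric.tendsto_atTop]
  intro ε hε
  -- choose K so that the tail is < ε/2
  have htail : Tendsto (fun K : ℕ => Cc * (r^(K+1) / (1-r))) atTop (𝓝 0) := by
    have h0 : Tendsto (fun K : ℕ => (r:ℝ)^K) atTop (𝓝 0) :=
      tendsto_pow_atTop_nhds_zero_of_lt_one hr0.le hr1
    have : (fun K : ℕ => Cc * (r^(K+1) / (1-r))) = fun K => (Cc * r / (1-r)) * r^K := by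
      funext K; ring
    rw [this]
    simpa using h0.const_mul (Cc * r / (1-r))
  obtain ⟨K, hK⟩ := (htail.eventually (gt_mem_nhds (by linarith : (0:ℝ) < ε/2))).exists
  -- the partial sums tend to 0
  have hA : ∀ k : ℕ, Tendsto
      (fun n : ℕ => (n:ℝ)⁻¹ * ‖∑ j ∈ range n, ((Z j ω)⁻¹)^(k+1)‖)
      atTop (𝓝 0) := by
    intro k
    have := (hsl k).norm
    simp only [norm_smul, Real.norm_eq_abs, abs_inv, Nat.abs_cast,
      norm_zero] at this
    exact this
  have hD : Tendsto (fun n : ℕ => Cc * ∑ k ∈ range (K+1),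
      (n:ℝ)⁻¹ * ‖∑ j ∈ range n, ((Z j ω)⁻¹)^(k+1)‖) atTop (𝓝 0) := by
    have hsum0 : Tendsto (fun n : ℕ => ∑ k ∈ range (K+1),
        (n:ℝ)⁻¹ * ‖∑ j ∈ range n, ((Z j ω)⁻¹)^(k+1)‖) atTop (𝓝 0) := by
      have := tendsto_finset_sum (range (K+1)) (fun k _ => hA k)
      simpa using this
    simpa using hsum0.const_mul Cc
  have hev : ∀ᶠ n : ℕ in atTop, (Cc * ∑ k ∈ range (K+1),
      (n:ℝ)⁻¹ * ‖∑ j ∈ range n, ((Z j ω)⁻¹)^(k+1)‖ < ε/2) ∧ 1 ≤ n :=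
    (hD.eventually (gt_mem_nhds (by linarith : (0:ℝ) < ε/2))).and (eventually_ge_atTop 1)
  obtain ⟨N, hN⟩ := eventually_atTop.mp hev
  refine ⟨N, fun n hn => ?_⟩
  obtain ⟨hN1, hN2⟩ := hN n hn
  have hnpos : 0 < n := hN2
  set b : ℝ := Cc * ((∑ k ∈ range (K+1),
      (n:ℝ)⁻¹ * ‖∑ j ∈ range n, ((Z j ω)⁻¹)^(k+1)‖) + r^(K+1) / (1-r)) with hb_def
  have hb_nonneg : 0 ≤ b := by
    have : (0:ℝ) ≤ r^(K+1)/(1-r) := div_nonneg (by positivity) (by linarith)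
    have h2 : (0:ℝ) ≤ ∑ k ∈ range (K+1),
        (n:ℝ)⁻¹ * ‖∑ j ∈ range n, ((Z j ω)⁻¹)^(k+1)‖ :=
      Finset.sum_nonneg fun k _ => by positivity
    exact mul_nonneg hC.le (add_nonneg h2 this)
  have hsup_le : (⨆ z ∈ Metric.closedBall (0 : ℂ) r,
      ‖(n : ℂ)⁻¹ * Polynomial.eval z
            (polarDeriv n ξ (∏ j ∈ Finset.range n, (X - C (Z j ω)))) /
          Polynomial.eval z (∏ j ∈ Finset.range n, (X - C (Z j ω))) - 1‖) ≤ b := by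
    refine Real.iSup_le (fun z => Real.iSup_le (fun hz => ?_) hb_nonneg) hb_nonneg
    have hzr : ‖z‖ ≤ r := by
      rw [Metric.mem_closedBall, dist_zero_right] at hz
      exact hz
    exact st13_boundLem z ξ r hr0 hr1 hzr (fun j => Z j ω) habs n hnpos K
  have hsup_nonneg : 0 ≤ ⨆ z ∈ Metric.closedBall (0 : ℂ) r,
      ‖(n : ℂ)⁻¹ * Polynomial.eval z
            (polarDeriv n ξ (∏ j ∈ Finset.range n, (X - C (Z j ω)))) /
          Polynomial.eval z (∏ j ∈ Finset.range n, (X - C (Z j ω))) - 1‖ :=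
    Real.iSup_nonneg fun z => Real.iSup_nonneg fun _ => norm_nonneg _
  have hb_lt : b < ε := by
    have : b = Cc * (∑ k ∈ range (K+1),
        (n:ℝ)⁻¹ * ‖∑ j ∈ range n, ((Z j ω)⁻¹)^(k+1)‖)
        + Cc * (r^(K+1) / (1-r)) := by rw [hb_def]; ring
    rw [this]
    linarith
  rw [Real.dist_eq, sub_zero, abs_of_nonneg hsup_nonneg]
  exact lt_of_le_of_lt hsup_le hb_lt
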